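/- arXiv:1801.01318 — 3 statements merged into one kernel-verified Lean document; each statement's English description precedes it below -/
import Mathlib

section
/- Let A be a formally real integral domain which is an ℝ-algebra. Let I₀, M₀ be ℝ-linearly independent imaginary units with a, b, K₀ as in Notation 5.1, and let f, h ∈ Quaternion A \ {0} be such that f * h is I₀-sliced but not scalar and h * f is M₀-sliced but not scalar. Then there exist ε ∈ {1, −1} and nonzero I₀-sliced elements f̃, h̃ ∈ Quaternion A with f = f̃ * (1 + ((a + ε)/b)·ι(K₀)) and h = (1 − ((a + ε)/b)·ι(K₀)) * h̃. (Theorem 6.1, case (ii).) -/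
open Quaternion

/-- The componentwise extension `ι : ℍ[ℝ] → ℍ[A]` of `algebraMap ℝ A`. -/
noncomputable def qmap {A : Type*} [CommRing A] [Algebra ℝ A] (q : Quaternion ℝ) :
    Quaternion A :=
  ⟨algebraMap ℝ A q.re, algebraMap ℝ A q.imI, algebraMap ℝ A q.imJ, algebraMap ℝ A q.imK⟩

/-- An imaginary unit: a real quaternion with zero real part squaring to `-1`. -/
def IsImaginaryUnit (I : Quaternion ℝ) : Prop := I.re = 0 ∧ I ^ 2 = -1

/-- `q` is `I`-sliced if `q = a + b·ι(I)` for some `a, b ∈ A`. -/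
noncomputable def IsSliced {A : Type*} [CommRing A] [Algebra ℝ A]
    (I : Quaternion ℝ) (q : Quaternion A) : Prop :=
  ∃ a b : A, q = (a : Quaternion A) + (b : Quaternion A) * qmap I

/-- `q` is scalar if its vector part vanishes. -/
def IsScalarQ {A : Type*} [CommRing A] (q : Quaternion A) : Prop := q.im = 0

/-- `A` is formally real: a sum of four squares vanishes only trivially. -/
def FormallyRealFour (A : Type*) [CommRing A] : Prop :=
  ∀ a b c d : A, a ^ 2 + b ^ 2 + c ^ 2 + d ^ 2 = 0 → a = 0 ∧ b = 0 ∧ c = 0 ∧ d = 0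

section Aux
set_option maxHeartbeats 1000000

variable {A : Type*} [CommRing A] [Algebra ℝ A]

@[simp] lemma qmap_re (q : Quaternion ℝ) : (qmap q : Quaternion A).re = algebraMap ℝ A q.re := rfl
@[simp] lemma qmap_imI (q : Quaternion ℝ) :
    (qmap q : Quaternion A).imI = algebraMap ℝ A q.imI := rfl
@[simp] lemma qmap_imJ (q : Quaternion ℝ) :
    (qmap q : Quaternion A).imJ = algebraMap ℝ A q.imJ := rfl
@[simp] lemma qmap_imK (q : Quaternion ℝ) :
    (qmap q : Quaternion A).imK = algebraMap ℝ A q.imK := rfl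

lemma qmap_mul (p q : Quaternion ℝ) : (qmap (p * q) : Quaternion A) = qmap p * qmap q := by
  ext <;> simp [Quaternion.re_mul, Quaternion.imI_mul, Quaternion.imJ_mul, Quaternion.imK_mul,
    map_add, map_sub, map_mul]

/-- `EE P x y = x + y * P`. -/
noncomputable def EE (P : Quaternion A) (x y : A) : Quaternion A :=
  (x : Quaternion A) + (y : Quaternion A) * P

lemma EE_add (P : Quaternion A) (x y u v : A) :
    EE P x y + EE P u v = EE P (x + u) (y + v) := by
  simp only [EE, Quaternion.coe_add, add_mul]; abel

lemma EE_neg (P : Quaternion A) (x y : A) : -EE P x y = EE P (-x) (-y) := by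
  simp only [EE, Quaternion.coe_neg, neg_mul]; abel

lemma EE_congr (P : Quaternion A) {x y u v : A} (h1 : x = u) (h2 : y = v) :
    EE P x y = EE P u v := by rw [h1, h2]

lemma EE_zero (P : Quaternion A) : EE P 0 0 = 0 := by simp [EE]

lemma EE_mul (P : Quaternion A) (hPre : P.re = 0) (hσ : P.imI^2 + P.imJ^2 + P.imK^2 = 1)
    (x y u v : A) : EE P x y * EE P u v = EE P (x*u - y*v) (x*v + y*u) := by
  ext <;>
    simp [EE, Quaternion.re_mul, Quaternion.imI_mul, Quaternion.imJ_mul, Quaternion.imK_mul,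
      hPre]
  · linear_combination (-(y*v))*hσ
  · ring
  · ring
  · ring

lemma EE_swap (P Q : Quaternion A) (hPre : P.re = 0) (hQre : Q.re = 0)
    (hdot : P.imI*Q.imI + P.imJ*Q.imJ + P.imK*Q.imK = 0) (x y : A) :
    Q * EE P x y = EE P x (-y) * Q := by
  ext <;>
    simp [EE, Quaternion.re_mul, Quaternion.imI_mul, Quaternion.imJ_mul, Quaternion.imK_mul,
      hPre, hQre]
  · linear_combination (-2*y)*hdot
  · ring
  · ring
  · ring

lemma EE_expand (P Q : Quaternion A) (hPre : P.re = 0)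
    (hσ : P.imI^2 + P.imJ^2 + P.imK^2 = 1) (hQre : Q.re = 0)
    (hdot : P.imI*Q.imI + P.imJ*Q.imJ + P.imK*Q.imK = 0) (hQ2 : Q * Q = -1)
    (x₀ x₁ y₀ y₁ u₀ u₁ v₀ v₁ : A) :
    (EE P x₀ x₁ + EE P y₀ y₁ * Q) * (EE P u₀ u₁ + EE P v₀ v₁ * Q) =
    EE P (x₀*u₀ - x₁*u₁ - (y₀*v₀ + y₁*v₁)) (x₀*u₁ + x₁*u₀ - (y₁*v₀ - y₀*v₁))
    + EE P (x₀*v₀ - x₁*v₁ + (y₀*u₀ + y₁*u₁)) (x₀*v₁ + x₁*v₀ + (y₁*u₀ - y₀*u₁)) * Q := by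
  have T3 : (EE P y₀ y₁ * Q) * EE P u₀ u₁ = (EE P y₀ y₁ * EE P u₀ (-u₁)) * Q := by
    rw [mul_assoc, EE_swap P Q hPre hQre hdot, ← mul_assoc]
  have T4 : (EE P y₀ y₁ * Q) * (EE P v₀ v₁ * Q) = -(EE P y₀ y₁ * EE P v₀ (-v₁)) := by
    rw [mul_assoc, ← mul_assoc Q, EE_swap P Q hPre hQre hdot, mul_assoc, hQ2, mul_neg_one,
      mul_neg]
  have comb : ∀ (a1 b1 a2 b2 a3 b3 a4 b4 : A),
      EE P a1 b1 + EE P a2 b2 * Q + (EE P a3 b3 * Q + -(EE P a4 b4)) =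
      EE P (a1 - a4) (b1 - b4) + EE P (a2 + a3) (b2 + b3) * Q := by
    intro a1 b1 a2 b2 a3 b3 a4 b4
    simp only [EE, Quaternion.coe_add, Quaternion.coe_sub, add_mul, sub_mul]
    abel
  rw [add_mul, mul_add, mul_add, T3, T4, ← mul_assoc,
    EE_mul P hPre hσ, EE_mul P hPre hσ, EE_mul P hPre hσ, EE_mul P hPre hσ, comb]
  congr 1
  · exact EE_congr P (by ring) (by ring)
  · congr 1
    exact EE_congr P (by ring) (by ring)

lemma EE_split (P Q : Quaternion A) (x₀ x₁ y₀ y₁ : A) :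
    EE P x₀ x₁ + EE P y₀ y₁ * Q =
    (x₀ : Quaternion A) + (x₁ : Quaternion A) * P + (y₀ : Quaternion A) * Q
      + (y₁ : Quaternion A) * (P * Q) := by
  simp only [EE, add_mul, mul_assoc]
  abel

lemma decompose (I₀ J₀ K₀ : Quaternion ℝ)
    (hIre : I₀.re = 0) (hJre : J₀.re = 0) (hKre : K₀.re = 0)
    (cII : I₀.imI^2 + J₀.imI^2 + K₀.imI^2 = 1)
    (cJJ : I₀.imJ^2 + J₀.imJ^2 + K₀.imJ^2 = 1)
    (cKK : I₀.imK^2 + J₀.imK^2 + K₀.imK^2 = 1)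
    (cIJ : I₀.imI*I₀.imJ + J₀.imI*J₀.imJ + K₀.imI*K₀.imJ = 0)
    (cIK : I₀.imI*I₀.imK + J₀.imI*J₀.imK + K₀.imI*K₀.imK = 0)
    (cJK : I₀.imJ*I₀.imK + J₀.imJ*J₀.imK + K₀.imJ*K₀.imK = 0)
    (q : Quaternion A) :
    q = ((q.re : A) : Quaternion A)
      + ((algebraMap ℝ A I₀.imI * q.imI + algebraMap ℝ A I₀.imJ * q.imJ
          + algebraMap ℝ A I₀.imK * q.imK : A) : Quaternion A) * qmap I₀
      + ((algebraMap ℝ A J₀.imI * q.imI + algebraMap ℝ A J₀.imJ * q.imJ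
          + algebraMap ℝ A J₀.imK * q.imK : A) : Quaternion A) * qmap J₀
      + ((algebraMap ℝ A K₀.imI * q.imI + algebraMap ℝ A K₀.imJ * q.imJ
          + algebraMap ℝ A K₀.imK * q.imK : A) : Quaternion A) * qmap K₀ := by
  have mII := congrArg (algebraMap ℝ A) cII
  have mJJ := congrArg (algebraMap ℝ A) cJJ
  have mKK := congrArg (algebraMap ℝ A) cKK
  have mIJ := congrArg (algebraMap ℝ A) cIJ
  have mIK := congrArg (algebraMap ℝ A) cIK
  have mJK := congrArg (algebraMap ℝ A) cJK
  simp only [map_add, map_mul, map_pow, map_one, map_zero] at mII mJJ mKK mIJ mIK mJK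
  ext <;> simp [Quaternion.re_mul, Quaternion.imI_mul, Quaternion.imJ_mul, Quaternion.imK_mul,
    hIre, hJre, hKre]
  · linear_combination -q.imI*mII - q.imJ*mIJ - q.imK*mIK
  · linear_combination -q.imI*mIJ - q.imJ*mJJ - q.imK*mJK
  · linear_combination -q.imI*mIK - q.imJ*mJK - q.imK*mKK

lemma uniq (I₀ J₀ K₀ : Quaternion ℝ)
    (hIre : I₀.re = 0) (hJre : J₀.re = 0) (hKre : K₀.re = 0)
    (rII : I₀.imI^2 + I₀.imJ^2 + I₀.imK^2 = 1)
    (rJJ : J₀.imI^2 + J₀.imJ^2 + J₀.imK^2 = 1)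
    (rKK : K₀.imI^2 + K₀.imJ^2 + K₀.imK^2 = 1)
    (rIJ : I₀.imI*J₀.imI + I₀.imJ*J₀.imJ + I₀.imK*J₀.imK = 0)
    (rIK : I₀.imI*K₀.imI + I₀.imJ*K₀.imJ + I₀.imK*K₀.imK = 0)
    (rJK : J₀.imI*K₀.imI + J₀.imJ*K₀.imJ + J₀.imK*K₀.imK = 0)
    (x₀ x₁ y₀ y₁ : A)
    (h : (x₀ : Quaternion A) + (x₁ : Quaternion A) * qmap I₀
       + (y₀ : Quaternion A) * qmap J₀ + (y₁ : Quaternion A) * qmap K₀ = 0) :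
    x₀ = 0 ∧ x₁ = 0 ∧ y₀ = 0 ∧ y₁ = 0 := by
  have mII := congrArg (algebraMap ℝ A) rII
  have mJJ := congrArg (algebraMap ℝ A) rJJ
  have mKK := congrArg (algebraMap ℝ A) rKK
  have mIJ := congrArg (algebraMap ℝ A) rIJ
  have mIK := congrArg (algebraMap ℝ A) rIK
  have mJK := congrArg (algebraMap ℝ A) rJK
  simp only [map_add, map_mul, map_pow, map_one, map_zero] at mII mJJ mKK mIJ mIK mJK
  have hre := congrArg QuaternionAlgebra.re h
  have hI := congrArg QuaternionAlgebra.imI h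
  have hJ := congrArg QuaternionAlgebra.imJ h
  have hK := congrArg QuaternionAlgebra.imK h
  simp [Quaternion.re_mul, Quaternion.imI_mul, Quaternion.imJ_mul, Quaternion.imK_mul,
    hIre, hJre, hKre] at hre hI hJ hK
  refine ⟨hre, ?_, ?_, ?_⟩
  · linear_combination (algebraMap ℝ A I₀.imI)*hI + (algebraMap ℝ A I₀.imJ)*hJ
      + (algebraMap ℝ A I₀.imK)*hK - x₁*mII - y₀*mIJ - y₁*mIK
  · linear_combination (algebraMap ℝ A J₀.imI)*hI + (algebraMap ℝ A J₀.imJ)*hJ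
      + (algebraMap ℝ A J₀.imK)*hK - x₁*mIJ - y₀*mJJ - y₁*mJK
  · linear_combination (algebraMap ℝ A K₀.imI)*hI + (algebraMap ℝ A K₀.imJ)*hJ
      + (algebraMap ℝ A K₀.imK)*hK - x₁*mIK - y₀*mJK - y₁*mKK

lemma core {A : Type*} [CommRing A] [IsDomain A] (hFR : FormallyRealFour A)
    (α β δ d x₀ x₁ y₀ y₁ u₀ u₁ v₀ v₁ : A)
    (hβ : β ≠ 0) (hαβ : α^2 + β^2 = 1) (hδ : δ = d * β) (hd : d ≠ 0)
    (hfne : ¬(x₀ = 0 ∧ x₁ = 0 ∧ y₀ = 0 ∧ y₁ = 0))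
    (hhne : ¬(u₀ = 0 ∧ u₁ = 0 ∧ v₀ = 0 ∧ v₁ = 0))
    (e1a : x₀*v₀ - x₁*v₁ + (y₀*u₀ + y₁*u₁) = 0)
    (e1b : x₀*v₁ + x₁*v₀ + (y₁*u₀ - y₀*u₁) = 0)
    (e2a : u₀*y₀ - u₁*y₁ + (v₀*x₀ + v₁*x₁) = δ)
    (e2b : u₀*y₁ + u₁*y₀ + (v₁*x₀ - v₀*x₁) = 0)
    (e3 : u₀*x₁ + u₁*x₀ + (v₀*y₁ - v₁*y₀) = d*α) :
    ∃ η : A, (η = 1 ∨ η = -1) ∧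
      (u₀*x₁ + u₁*x₀) ≠ 0 ∧
      β*δ = 2*(u₀*x₁ + u₁*x₀)*(η - α) ∧
      2*(u₀*x₁ + u₁*x₀)*y₀ = δ*x₁ ∧ 2*(u₀*x₁ + u₁*x₀)*y₁ = -(δ*x₀) ∧
      2*(u₀*x₁ + u₁*x₀)*v₀ = δ*u₁ ∧ 2*(u₀*x₁ + u₁*x₀)*v₁ = δ*u₀ ∧
      ¬(x₀ = 0 ∧ x₁ = 0) ∧ ¬(u₀ = 0 ∧ u₁ = 0) := by
  have czero : ∀ p q r s : A, p*r - q*s = 0 → p*s + q*r = 0 →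
      (p = 0 ∧ q = 0) ∨ (r = 0 ∧ s = 0) := by
    intro p q r s h1 h2'
    have hps : (p^2 + q^2) * (r^2 + s^2) = 0 := by
      have e : (p^2 + q^2) * (r^2 + s^2) = (p*r - q*s)^2 + (p*s + q*r)^2 := by ring
      rw [e, h1, h2']; ring
    rcases mul_eq_zero.mp hps with hc | hc
    · left
      have := hFR p q 0 0 (by linear_combination hc)
      exact ⟨this.1, this.2.1⟩
    · right
      have := hFR r s 0 0 (by linear_combination hc)
      exact ⟨this.1, this.2.1⟩
  have hδ0 : δ ≠ 0 := hδ ▸ mul_ne_zero hd hβ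
  have hF1 : ¬(x₀ = 0 ∧ x₁ = 0) := by
    rintro ⟨hx0, hx1⟩
    have c1 : y₀*u₀ - y₁*(-u₁) = 0 := by linear_combination e1a - v₀*hx0 + v₁*hx1
    have c2 : y₀*(-u₁) + y₁*u₀ = 0 := by linear_combination e1b - v₁*hx0 - v₀*hx1
    rcases czero y₀ y₁ u₀ (-u₁) c1 c2 with ⟨hy0, hy1⟩ | ⟨hu0, hu1⟩
    · exact hfne ⟨hx0, hx1, hy0, hy1⟩
    · have hu1' : u₁ = 0 := by linear_combination -hu1
      exact hδ0 (by linear_combination -e2a + y₀*hu0 - y₁*hu1' + v₀*hx0 + v₁*hx1 : δ = 0)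
  have hH1 : ¬(u₀ = 0 ∧ u₁ = 0) := by
    rintro ⟨hu0, hu1⟩
    have c1 : x₀*v₀ - x₁*v₁ = 0 := by linear_combination e1a - y₀*hu0 - y₁*hu1
    have c2 : x₀*v₁ + x₁*v₀ = 0 := by linear_combination e1b - y₁*hu0 + y₀*hu1
    rcases czero x₀ x₁ v₀ v₁ c1 c2 with ⟨hx0, hx1⟩ | ⟨hv0, hv1⟩
    · exact hδ0 (by linear_combination -e2a + y₀*hu0 - y₁*hu1 + v₀*hx0 + v₁*hx1 : δ = 0)
    · exact hhne ⟨hu0, hu1, hv0, hv1⟩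
  have g1 : 2*(u₀*x₁ + u₁*x₀)*y₀ = δ*x₁ := by
    linear_combination x₁*e1a - x₀*e1b + x₁*e2a + x₀*e2b
  have g2 : 2*(u₀*x₁ + u₁*x₀)*y₁ = -(δ*x₀) := by
    linear_combination x₀*e1a + x₁*e1b - x₀*e2a + x₁*e2b
  have g3 : 2*(u₀*x₁ + u₁*x₀)*v₀ = δ*u₁ := by
    linear_combination u₁*e1a + u₀*e1b + u₁*e2a - u₀*e2b
  have g4 : 2*(u₀*x₁ + u₁*x₀)*v₁ = δ*u₀ := by
    linear_combination -u₀*e1a + u₁*e1b + u₀*e2a + u₁*e2b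
  have hp1 : (u₀*x₁ + u₁*x₀) ≠ 0 := by
    intro hp
    have hx1 : x₁ = 0 := by
      rcases mul_eq_zero.mp (show δ*x₁ = 0 by linear_combination -g1 + 2*y₀*hp) with hc | hc
      · exact absurd hc hδ0
      · exact hc
    have hx0 : x₀ = 0 := by
      rcases mul_eq_zero.mp (show δ*x₀ = 0 by linear_combination g2 - 2*y₁*hp) with hc | hc
      · exact absurd hc hδ0
      · exact hc
    exact hF1 ⟨hx0, hx1⟩
  set p₁ := u₀*x₁ + u₁*x₀ with hp₁def
  have key : β*p₁*(4*p₁^2 - δ^2) = 4*α*p₁^2*δ := by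
    linear_combination (4*p₁^2*β)*e3 - (β*(2*p₁*y₁))*g3 - (β*δ*u₁)*g2 + (β*2*p₁*y₀)*g4 +
      (β*δ*u₀)*g1 - (4*p₁^2*α)*hδ
  have hq : p₁ * ((β*δ + 2*α*p₁ - 2*p₁) * (β*δ + 2*α*p₁ + 2*p₁)) = 0 := by
    linear_combination (-β)*key + 4*p₁^3*hαβ
  rcases mul_eq_zero.mp hq with hc | hc
  · exact absurd hc hp1
  rcases mul_eq_zero.mp hc with hc' | hc'
  · refine ⟨1, Or.inl rfl, hp1, ?_, g1, g2, g3, g4, hF1, hH1⟩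
    linear_combination hc'
  · refine ⟨-1, Or.inr rfl, hp1, ?_, g1, g2, g3, g4, hF1, hH1⟩
    linear_combination hc'

end Aux

set_option maxHeartbeats 4000000 in
theorem two_sided_products_sliced_case_distinct_slices
    {A : Type*} [CommRing A] [IsDomain A] [Algebra ℝ A] (hFR : FormallyRealFour A)
    (I₀ M₀ : Quaternion ℝ) (hI₀ : IsImaginaryUnit I₀) (hM₀ : IsImaginaryUnit M₀)
    (hind : LinearIndependent ℝ ![I₀, M₀])
    (a b : ℝ) (J₀ K₀ : Quaternion ℝ)
    (ha : a = I₀.imI * M₀.imI + I₀.imJ * M₀.imJ + I₀.imK * M₀.imK)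
    (hb : b = Real.sqrt (1 - a ^ 2))
    (hK₀ : K₀ = (2 * b)⁻¹ • (I₀ * M₀ - M₀ * I₀))
    (hJ₀ : J₀ = K₀ * I₀)
    (f h : Quaternion A) (hf : f ≠ 0) (hh : h ≠ 0)
    (hfh : IsSliced I₀ (f * h)) (hfh' : ¬ IsScalarQ (f * h))
    (hhf : IsSliced M₀ (h * f)) (hhf' : ¬ IsScalarQ (h * f)) :
    ∃ ε : ℝ, (ε = 1 ∨ ε = -1) ∧
      ∃ ft ht : Quaternion A, IsSliced I₀ ft ∧ ft ≠ 0 ∧ IsSliced I₀ ht ∧ ht ≠ 0 ∧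
        f = ft * (1 + ((a + ε) / b) • qmap K₀) ∧
        h = (1 - ((a + ε) / b) • qmap K₀) * ht := by
  ------------------------------------------------------------------
  -- Part 1 : real-level facts
  ------------------------------------------------------------------
  obtain ⟨hIre, hI2'⟩ := hI₀
  obtain ⟨hMre, hM2'⟩ := hM₀
  have hI2 : I₀ * I₀ = -1 := by rw [← sq]; exact hI2'
  have hM2 : M₀ * M₀ = -1 := by rw [← sq]; exact hM2'
  have hsumI : I₀.imI^2 + I₀.imJ^2 + I₀.imK^2 = 1 := by
    have := congrArg QuaternionAlgebra.re hI2
    simp [Quaternion.re_mul, hIre] at this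
    nlinarith [this]
  have hsumM : M₀.imI^2 + M₀.imJ^2 + M₀.imK^2 = 1 := by
    have := congrArg QuaternionAlgebra.re hM2
    simp [Quaternion.re_mul, hMre] at this
    nlinarith [this]
  have ha2 : a^2 < 1 := by
    rcases lt_or_ge (a^2) 1 with hlt | hge
    · exact hlt
    · exfalso
      have hz : (M₀.imI - a*I₀.imI)^2 + (M₀.imJ - a*I₀.imJ)^2 + (M₀.imK - a*I₀.imK)^2
          = 1 - a^2 := by linear_combination a^2*hsumI + hsumM + 2*a*ha
      have hle : (1:ℝ) - a^2 ≤ 0 := by linarith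
      have e1 : (M₀.imI - a*I₀.imI)^2 = 0 := le_antisymm
        (by linarith [sq_nonneg (M₀.imJ - a*I₀.imJ), sq_nonneg (M₀.imK - a*I₀.imK)])
        (sq_nonneg _)
      have e2 : (M₀.imJ - a*I₀.imJ)^2 = 0 := le_antisymm
        (by linarith [sq_nonneg (M₀.imI - a*I₀.imI), sq_nonneg (M₀.imK - a*I₀.imK)])
        (sq_nonneg _)
      have e3 : (M₀.imK - a*I₀.imK)^2 = 0 := le_antisymm
        (by linarith [sq_nonneg (M₀.imI - a*I₀.imI), sq_nonneg (M₀.imJ - a*I₀.imJ)])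
        (sq_nonneg _)
      have h1 : M₀.imI - a*I₀.imI = 0 := sq_eq_zero_iff.mp e1
      have h2 : M₀.imJ - a*I₀.imJ = 0 := sq_eq_zero_iff.mp e2
      have h3 : M₀.imK - a*I₀.imK = 0 := sq_eq_zero_iff.mp e3
      have hMI : M₀ = a • I₀ := by ext <;> simp [hIre, hMre] <;> linarith
      have ha1 : a*a = 1 := by
        linear_combination hsumM - a^2*hsumI - (M₀.imI + a*I₀.imI)*h1 -
          (M₀.imJ + a*I₀.imJ)*h2 - (M₀.imK + a*I₀.imK)*h3
      have : a • M₀ = I₀ := by rw [hMI, smul_smul, ha1, one_smul]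
      exact ((linearIndependent_fin2.mp hind).2 a) this
  have hbpos : 0 < b := by rw [hb]; exact Real.sqrt_pos.mpr (by linarith)
  have hb0 : b ≠ 0 := ne_of_gt hbpos
  have hb2 : b^2 = 1 - a^2 := by rw [hb]; exact Real.sq_sqrt (by linarith)
  have hIM : I₀ * M₀ + M₀ * I₀ = ((-(2*a) : ℝ) : ℍ[ℝ]) := by
    ext <;> simp [Quaternion.re_mul, Quaternion.imI_mul, Quaternion.imJ_mul, Quaternion.imK_mul,
      hIre, hMre, ha] <;> ring
  have hC : I₀*(I₀*M₀ - M₀*I₀) + (I₀*M₀ - M₀*I₀)*I₀ = 0 := by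
    have e : I₀*(I₀*M₀ - M₀*I₀) + (I₀*M₀ - M₀*I₀)*I₀ = (I₀*I₀)*M₀ - M₀*(I₀*I₀) := by
      noncomm_ring
    rw [e, hI2]; noncomm_ring
  have hIK0 : I₀*K₀ + K₀*I₀ = 0 := by
    rw [hK₀, mul_smul_comm, smul_mul_assoc, ← smul_add, hC, smul_zero]
  have hIK : I₀*K₀ = -(K₀*I₀) := eq_neg_of_add_eq_zero_left hIK0
  have hIJK : I₀*J₀ = K₀ := by
    rw [hJ₀, ← mul_assoc, hIK, neg_mul, mul_assoc, hI2, mul_neg_one, neg_neg]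
  have hJI : J₀*I₀ = -K₀ := by rw [hJ₀, mul_assoc, hI2, mul_neg_one]
  have hCC : ∀ c : ℝ, c = 4*(a^2-1) →
      (I₀*M₀ - M₀*I₀)*(I₀*M₀ - M₀*I₀) = ((c:ℝ):ℍ[ℝ]) := by
    intro c hc
    ext <;> simp [Quaternion.re_mul, Quaternion.imI_mul, Quaternion.imJ_mul, Quaternion.imK_mul,
      hIre, hMre]
    · linear_combination (-4*(M₀.imI^2+M₀.imJ^2+M₀.imK^2))*hsumI - 4*hsumM -
        4*(a + (I₀.imI * M₀.imI + I₀.imJ * M₀.imJ + I₀.imK * M₀.imK))*ha - hc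
    · ring
    · ring
    · ring
  have hK2 : K₀*K₀ = -1 := by
    obtain ⟨c, hc, hCCc⟩ : ∃ c:ℝ, c = 4*(a^2-1) ∧
        (I₀*M₀ - M₀*I₀)*(I₀*M₀ - M₀*I₀) = ((c:ℝ):ℍ[ℝ]) := ⟨_, rfl, hCC _ rfl⟩
    rw [hK₀, smul_mul_assoc, mul_smul_comm, smul_smul, hCCc]
    ext <;> simp
    rw [hc]
    field_simp
    linear_combination 4*hb2
  have hJ2 : J₀*J₀ = -1 := by
    have e1 : J₀*J₀ = K₀*(I₀*K₀)*I₀ := by rw [hJ₀]; noncomm_ring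
    rw [hIK] at e1
    have e2 : K₀*(-(K₀*I₀))*I₀ = -((K₀*K₀)*(I₀*I₀)) := by noncomm_ring
    rw [e1, e2, hK2, hI2]; simp
  have hJK0 : J₀*K₀ + K₀*J₀ = 0 := by
    have e1 : J₀*K₀ + K₀*J₀ = K₀*(I₀*K₀) + (K₀*(K₀*I₀)) := by rw [hJ₀]; noncomm_ring
    rw [e1, hIK]; noncomm_ring
  have hIJ0 : I₀*J₀ + J₀*I₀ = 0 := by rw [hIJK, hJI]; simp
  have reC : (I₀ * M₀ - M₀ * I₀).re = 0 := by simp [Quaternion.re_mul]; ring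
  have reK : K₀.re = 0 := by rw [hK₀]; simp [reC]
  have rIK : I₀.imI*K₀.imI + I₀.imJ*K₀.imJ + I₀.imK*K₀.imK = 0 := by
    have := congrArg QuaternionAlgebra.re hIK0
    simp [Quaternion.re_mul, hIre, reK] at this
    nlinarith [this]
  have reJ : J₀.re = 0 := by
    rw [hJ₀]
    simp [Quaternion.re_mul, hIre, reK]
    nlinarith [rIK]
  have rJJ : J₀.imI^2 + J₀.imJ^2 + J₀.imK^2 = 1 := by
    have := congrArg QuaternionAlgebra.re hJ2
    simp [Quaternion.re_mul, reJ] at this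
    nlinarith [this]
  have rKK : K₀.imI^2 + K₀.imJ^2 + K₀.imK^2 = 1 := by
    have := congrArg QuaternionAlgebra.re hK2
    simp [Quaternion.re_mul, reK] at this
    nlinarith [this]
  have rIJ : I₀.imI*J₀.imI + I₀.imJ*J₀.imJ + I₀.imK*J₀.imK = 0 := by
    have := congrArg QuaternionAlgebra.re hIJ0
    simp [Quaternion.re_mul, hIre, reJ] at this
    nlinarith [this]
  have rJK : J₀.imI*K₀.imI + J₀.imJ*K₀.imJ + J₀.imK*K₀.imK = 0 := by
    have := congrArg QuaternionAlgebra.re hJK0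
    simp [Quaternion.re_mul, reJ, reK] at this
    nlinarith [this]
  -- M₀ decomposition
  have hMdec : M₀ = a • I₀ + b • J₀ := by
    have hIMc : I₀*M₀ = ((-(2*a):ℝ):ℍ[ℝ]) - M₀*I₀ := eq_sub_of_add_eq hIM
    have hCI : (I₀*M₀ - M₀*I₀)*I₀ = (-(2*a)) • I₀ + (2:ℝ) • M₀ := by
      have e1 : (I₀*M₀ - M₀*I₀)*I₀ = (I₀*M₀)*I₀ - M₀*(I₀*I₀) := by noncomm_ring
      rw [e1, hIMc, hI2, sub_mul, mul_assoc, hI2, Quaternion.coe_mul_eq_smul]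
      simp only [mul_neg_one]
      module
    have hbJ : b • J₀ = M₀ - a • I₀ := by
      rw [hJ₀, hK₀, smul_mul_assoc, smul_smul, hCI]
      have e : b * (2*b)⁻¹ = 2⁻¹ := by field_simp
      rw [e, smul_add, smul_smul, smul_smul]
      module
    rw [hbJ]; module
  -- column relations
  obtain ⟨cII, cJJ, cKK, cIJ, cIK, cJK⟩ :
      (I₀.imI^2 + J₀.imI^2 + K₀.imI^2 = 1) ∧
      (I₀.imJ^2 + J₀.imJ^2 + K₀.imJ^2 = 1) ∧
      (I₀.imK^2 + J₀.imK^2 + K₀.imK^2 = 1) ∧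
      (I₀.imI*I₀.imJ + J₀.imI*J₀.imJ + K₀.imI*K₀.imJ = 0) ∧
      (I₀.imI*I₀.imK + J₀.imI*J₀.imK + K₀.imI*K₀.imK = 0) ∧
      (I₀.imJ*I₀.imK + J₀.imJ*J₀.imK + K₀.imJ*K₀.imK = 0) := by
    set R : Matrix (Fin 3) (Fin 3) ℝ :=
      !![I₀.imI, I₀.imJ, I₀.imK; J₀.imI, J₀.imJ, J₀.imK; K₀.imI, K₀.imJ, K₀.imK] with hR
    set S : Matrix (Fin 3) (Fin 3) ℝ :=
      !![I₀.imI, J₀.imI, K₀.imI; I₀.imJ, J₀.imJ, K₀.imJ; I₀.imK, J₀.imK, K₀.imK] with hS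
    have hMMT : R * S = 1 := by
      ext i j
      fin_cases i <;> fin_cases j <;>
        simp [hR, hS, Matrix.mul_apply, Fin.sum_univ_three, Matrix.one_apply]
      · linear_combination hsumI
      · linear_combination rIJ
      · linear_combination rIK
      · linear_combination rIJ
      · linear_combination rJJ
      · linear_combination rJK
      · linear_combination rIK
      · linear_combination rJK
      · linear_combination rKK
    have hMTM : S * R = 1 := mul_eq_one_comm.mp hMMT
    have get : ∀ i j : Fin 3, (S * R) i j = (1 : Matrix (Fin 3) (Fin 3) ℝ) i j :=
      fun i j => by rw [hMTM]
    refine ⟨?_, ?_, ?_, ?_, ?_, ?_⟩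
    · have := get 0 0; simp [hR, hS, Matrix.mul_apply, Fin.sum_univ_three] at this
      nlinarith [this]
    · have := get 1 1; simp [hR, hS, Matrix.mul_apply, Fin.sum_univ_three] at this
      nlinarith [this]
    · have := get 2 2; simp [hR, hS, Matrix.mul_apply, Fin.sum_univ_three] at this
      nlinarith [this]
    · have := get 0 1; simp [hR, hS, Matrix.mul_apply, Fin.sum_univ_three] at this
      nlinarith [this]
    · have := get 0 2; simp [hR, hS, Matrix.mul_apply, Fin.sum_univ_three] at this
      nlinarith [this]
    · have := get 1 2; simp [hR, hS, Matrix.mul_apply, Fin.sum_univ_three] at this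
      nlinarith [this]
  ------------------------------------------------------------------
  -- Part 2 : A-level setup
  ------------------------------------------------------------------
  set P : Quaternion A := qmap I₀ with hPdef
  set Q : Quaternion A := qmap J₀ with hQdef
  have hPreA : P.re = 0 := by rw [hPdef]; simp [hIre]
  have hQreA : Q.re = 0 := by rw [hQdef]; simp [reJ]
  have hσP : P.imI^2 + P.imJ^2 + P.imK^2 = 1 := by
    rw [hPdef]
    have := congrArg (algebraMap ℝ A) hsumI
    simpa [map_add, map_pow, map_one] using this
  have hdotA : P.imI*Q.imI + P.imJ*Q.imJ + P.imK*Q.imK = 0 := by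
    rw [hPdef, hQdef]
    have := congrArg (algebraMap ℝ A) rIJ
    simpa [map_add, map_mul, map_zero] using this
  have hQ2A : Q * Q = -1 := by
    rw [hQdef, ← qmap_mul, hJ2]
    ext <;> simp
  have hPQ : P * Q = qmap K₀ := by rw [hPdef, hQdef, ← qmap_mul, hIJK]
  -- decompositions of f and h
  have hdecf : f = EE P f.re
        (algebraMap ℝ A I₀.imI * f.imI + algebraMap ℝ A I₀.imJ * f.imJ
          + algebraMap ℝ A I₀.imK * f.imK)
      + EE P (algebraMap ℝ A J₀.imI * f.imI + algebraMap ℝ A J₀.imJ * f.imJ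
          + algebraMap ℝ A J₀.imK * f.imK)
        (algebraMap ℝ A K₀.imI * f.imI + algebraMap ℝ A K₀.imJ * f.imJ
          + algebraMap ℝ A K₀.imK * f.imK) * Q := by
    rw [EE_split, hPQ]
    exact decompose I₀ J₀ K₀ hIre reJ reK cII cJJ cKK cIJ cIK cJK f
  have hdech : h = EE P h.re
        (algebraMap ℝ A I₀.imI * h.imI + algebraMap ℝ A I₀.imJ * h.imJ
          + algebraMap ℝ A I₀.imK * h.imK)
      + EE P (algebraMap ℝ A J₀.imI * h.imI + algebraMap ℝ A J₀.imJ * h.imJ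
          + algebraMap ℝ A J₀.imK * h.imK)
        (algebraMap ℝ A K₀.imI * h.imI + algebraMap ℝ A K₀.imJ * h.imJ
          + algebraMap ℝ A K₀.imK * h.imK) * Q := by
    rw [EE_split, hPQ]
    exact decompose I₀ J₀ K₀ hIre reJ reK cII cJJ cKK cIJ cIK cJK h
  set x₀ : A := f.re with hx₀
  set x₁ : A := algebraMap ℝ A I₀.imI * f.imI + algebraMap ℝ A I₀.imJ * f.imJ
      + algebraMap ℝ A I₀.imK * f.imK with hx₁
  set y₀ : A := algebraMap ℝ A J₀.imI * f.imI + algebraMap ℝ A J₀.imJ * f.imJ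
      + algebraMap ℝ A J₀.imK * f.imK with hy₀'
  set y₁ : A := algebraMap ℝ A K₀.imI * f.imI + algebraMap ℝ A K₀.imJ * f.imJ
      + algebraMap ℝ A K₀.imK * f.imK with hy₁'
  set u₀ : A := h.re with hu₀
  set u₁ : A := algebraMap ℝ A I₀.imI * h.imI + algebraMap ℝ A I₀.imJ * h.imJ
      + algebraMap ℝ A I₀.imK * h.imK with hu₁
  set v₀ : A := algebraMap ℝ A J₀.imI * h.imI + algebraMap ℝ A J₀.imJ * h.imJ
      + algebraMap ℝ A J₀.imK * h.imK with hv₀'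
  set v₁ : A := algebraMap ℝ A K₀.imI * h.imI + algebraMap ℝ A K₀.imJ * h.imJ
      + algebraMap ℝ A K₀.imK * h.imK with hv₁'
  -- uniqueness in the EE-coordinates
  have huniq4 : ∀ s₀ s₁ t₀ t₁ : A, EE P s₀ s₁ + EE P t₀ t₁ * Q = 0 →
      s₀ = 0 ∧ s₁ = 0 ∧ t₀ = 0 ∧ t₁ = 0 := by
    intro s₀ s₁ t₀ t₁ hz
    rw [EE_split, hPQ] at hz
    exact uniq I₀ J₀ K₀ hIre reJ reK hsumI rJJ rKK rIJ rIK rJK _ _ _ _ hz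
  have hdiff2 : ∀ A₀ A₁ B₀ B₁ s₀ s₁ t₀ t₁ : A,
      EE P A₀ A₁ + EE P B₀ B₁ * Q = EE P s₀ s₁ + EE P t₀ t₁ * Q →
      A₀ - s₀ = 0 ∧ A₁ - s₁ = 0 ∧ B₀ - t₀ = 0 ∧ B₁ - t₁ = 0 := by
    intro A₀ A₁ B₀ B₁ s₀ s₁ t₀ t₁ he
    apply huniq4
    have e2 : EE P (A₀ - s₀) (A₁ - s₁) + EE P (B₀ - t₀) (B₁ - t₁) * Q =
        (EE P A₀ A₁ + EE P B₀ B₁ * Q) - (EE P s₀ s₁ + EE P t₀ t₁ * Q) := by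
      simp only [EE, Quaternion.coe_sub, sub_mul, add_mul]
      abel
    rw [e2, he, sub_self]
  ------------------------------------------------------------------
  -- Part 3 : extraction of equations
  ------------------------------------------------------------------
  obtain ⟨s, t, hst⟩ := hfh
  have hfhE : f * h = EE P s t := hst
  have hexpf : f * h =
      EE P (x₀*u₀ - x₁*u₁ - (y₀*v₀ + y₁*v₁)) (x₀*u₁ + x₁*u₀ - (y₁*v₀ - y₀*v₁))
      + EE P (x₀*v₀ - x₁*v₁ + (y₀*u₀ + y₁*u₁)) (x₀*v₁ + x₁*v₀ + (y₁*u₀ - y₀*u₁)) * Q := by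
    conv_lhs => rw [hdecf, hdech]
    exact EE_expand P Q hPreA hσP hQreA hdotA hQ2A x₀ x₁ y₀ y₁ u₀ u₁ v₀ v₁
  have htmpf : f * h = EE P s t + EE P 0 0 * Q := by
    rw [hfhE, EE_zero, zero_mul, add_zero]
  have hfhzero := hdiff2 _ _ _ _ s t 0 0 (hexpf.symm.trans htmpf)
  have e1a : x₀*v₀ - x₁*v₁ + (y₀*u₀ + y₁*u₁) = 0 := by
    have := hfhzero.2.2.1; linear_combination this
  have e1b : x₀*v₁ + x₁*v₀ + (y₁*u₀ - y₀*u₁) = 0 := by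
    have := hfhzero.2.2.2; linear_combination this
  -- h*f side
  obtain ⟨c, d, hcd⟩ := hhf
  have qmapM : (qmap M₀ : Quaternion A) =
      ((algebraMap ℝ A a : A) : Quaternion A) * P
      + ((algebraMap ℝ A b : A) : Quaternion A) * Q := by
    rw [hPdef, hQdef]
    rw [show M₀ = a • I₀ + b • J₀ from hMdec]
    ext <;> simp [Quaternion.re_mul, Quaternion.imI_mul, Quaternion.imJ_mul, Quaternion.imK_mul,
      hIre, reJ, map_add, map_mul, Algebra.smul_def]
  have hcdE : h * f = EE P c (d * algebraMap ℝ A a) + EE P (d * algebraMap ℝ A b) 0 * Q := by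
    rw [hcd, qmapM]
    simp only [EE, Quaternion.coe_mul, Quaternion.coe_zero, zero_mul, add_zero]
    noncomm_ring
  have hexph : h * f =
      EE P (u₀*x₀ - u₁*x₁ - (v₀*y₀ + v₁*y₁)) (u₀*x₁ + u₁*x₀ - (v₁*y₀ - v₀*y₁))
      + EE P (u₀*y₀ - u₁*y₁ + (v₀*x₀ + v₁*x₁)) (u₀*y₁ + u₁*y₀ + (v₁*x₀ - v₀*x₁)) * Q := by
    conv_lhs => rw [hdech, hdecf]
    exact EE_expand P Q hPreA hσP hQreA hdotA hQ2A u₀ u₁ v₀ v₁ x₀ x₁ y₀ y₁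
  have hhfzero := hdiff2 _ _ _ _ c (d * algebraMap ℝ A a) (d * algebraMap ℝ A b) 0
    (hexph.symm.trans hcdE)
  have e3 : u₀*x₁ + u₁*x₀ + (v₀*y₁ - v₁*y₀) = d * algebraMap ℝ A a := by
    have := hhfzero.2.1; linear_combination this
  have e2a : u₀*y₀ - u₁*y₁ + (v₀*x₀ + v₁*x₁) = d * algebraMap ℝ A b := by
    have := hhfzero.2.2.1; linear_combination this
  have e2b : u₀*y₁ + u₁*y₀ + (v₁*x₀ - v₀*x₁) = 0 := by
    have := hhfzero.2.2.2; linear_combination this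
  -- d ≠ 0
  have hd : d ≠ 0 := by
    intro h0
    apply hhf'
    show (h*f).im = 0
    rw [hcd, h0]
    simp
  -- nonvanishing of coordinate vectors
  have hfne : ¬(x₀ = 0 ∧ x₁ = 0 ∧ y₀ = 0 ∧ y₁ = 0) := by
    rintro ⟨a0, a1, a2, a3⟩
    apply hf
    rw [hdecf, a0, a1, a2, a3, EE_zero]
    simp
  have hhne : ¬(u₀ = 0 ∧ u₁ = 0 ∧ v₀ = 0 ∧ v₁ = 0) := by
    rintro ⟨a0, a1, a2, a3⟩
    apply hh
    rw [hdech, a0, a1, a2, a3, EE_zero]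
    simp
  -- injectivity facts
  have hinj : Function.Injective (algebraMap ℝ A) := RingHom.injective _
  have hβ0 : algebraMap ℝ A b ≠ 0 := by
    intro h0
    exact hb0 (hinj (by rw [h0, map_zero]))
  have h2A : (2:A) ≠ 0 := by
    intro h0
    have : algebraMap ℝ A 2 = algebraMap ℝ A 0 := by
      rw [map_zero]; rw [map_ofNat]; exact h0
    norm_num [hinj this] at *
  have hαβ : (algebraMap ℝ A a)^2 + (algebraMap ℝ A b)^2 = 1 := by
    have hr : a^2 + b^2 = 1 := by rw [hb2]; ring
    have := congrArg (algebraMap ℝ A) hr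
    simpa [map_add, map_pow, map_one] using this
  ------------------------------------------------------------------
  -- Part 4 : the core argument
  ------------------------------------------------------------------
  obtain ⟨η, hη, hp1, hβδ, g1, g2, g3, g4, hF1, hH1⟩ :=
    core hFR (algebraMap ℝ A a) (algebraMap ℝ A b) (d * algebraMap ℝ A b) d
      x₀ x₁ y₀ y₁ u₀ u₁ v₀ v₁ hβ0 hαβ rfl hd hfne hhne e1a e1b e2a e2b e3
  have main : ∀ ε : ℝ, algebraMap ℝ A (a + ε) = algebraMap ℝ A a - η →
      ∃ ft ht : Quaternion A, IsSliced I₀ ft ∧ ft ≠ 0 ∧ IsSliced I₀ ht ∧ ht ≠ 0 ∧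
        f = ft * (1 + ((a + ε) / b) • qmap K₀) ∧
        h = (1 - ((a + ε) / b) • qmap K₀) * ht := by
    intro ε hε
    set Λ : A := algebraMap ℝ A ((a + ε)/b) with hΛ
    have hΛβ : Λ * algebraMap ℝ A b = algebraMap ℝ A a - η := by
      rw [hΛ, ← map_mul, div_mul_cancel₀ _ hb0]
      exact hε
    have δeq : d * algebraMap ℝ A b = -(2*(u₀*x₁+u₁*x₀)*Λ) := by
      have h0 : algebraMap ℝ A b * ((d * algebraMap ℝ A b) + 2*(u₀*x₁+u₁*x₀)*Λ) = 0 := by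
        linear_combination hβδ + 2*(u₀*x₁+u₁*x₀)*hΛβ
      rcases mul_eq_zero.mp h0 with hc | hc
      · exact absurd hc hβ0
      · exact eq_neg_of_add_eq_zero_left hc
    have h2p : (2*(u₀*x₁+u₁*x₀)) ≠ 0 := mul_ne_zero h2A hp1
    have hgy₀ : y₀ = -(x₁*Λ) := by
      have hz : 2*(u₀*x₁+u₁*x₀)*(y₀ + x₁*Λ) = 0 := by linear_combination g1 + x₁*δeq
      rcases mul_eq_zero.mp hz with hc | hc
      · exact absurd hc h2p
      · exact eq_neg_of_add_eq_zero_left hc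
    have hgy₁ : y₁ = x₀*Λ := by
      have hz : 2*(u₀*x₁+u₁*x₀)*(y₁ - x₀*Λ) = 0 := by linear_combination g2 - x₀*δeq
      rcases mul_eq_zero.mp hz with hc | hc
      · exact absurd hc h2p
      · linear_combination hc
    have hgv₀ : v₀ = -(u₁*Λ) := by
      have hz : 2*(u₀*x₁+u₁*x₀)*(v₀ + u₁*Λ) = 0 := by linear_combination g3 + u₁*δeq
      rcases mul_eq_zero.mp hz with hc | hc
      · exact absurd hc h2p
      · exact eq_neg_of_add_eq_zero_left hc
    have hgv₁ : v₁ = -(u₀*Λ) := by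
      have hz : 2*(u₀*x₁+u₁*x₀)*(v₁ + u₀*Λ) = 0 := by linear_combination g4 + u₀*δeq
      rcases mul_eq_zero.mp hz with hc | hc
      · exact absurd hc h2p
      · exact eq_neg_of_add_eq_zero_left hc
    -- the scalar action of (a+ε)/b
    have hasm : ∀ (r : ℝ) (X : Quaternion A),
        r • X = ((algebraMap ℝ A r : A) : Quaternion A) * X := by
      intro r X
      rw [Algebra.smul_def]
      rfl
    have hsm : ((a + ε)/b) • (qmap K₀ : Quaternion A) = (Λ : Quaternion A) * (P * Q) := by
      rw [hasm, hPQ, hΛ]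
    refine ⟨EE P x₀ x₁, EE P u₀ u₁, ⟨x₀, x₁, rfl⟩, ?_, ⟨u₀, u₁, rfl⟩, ?_, ?_, ?_⟩
    · intro h0
      obtain ⟨z0, z1, -, -⟩ := huniq4 x₀ x₁ 0 0 (by rw [EE_zero, zero_mul, add_zero, h0])
      exact hF1 ⟨z0, z1⟩
    · intro h0
      obtain ⟨z0, z1, -, -⟩ := huniq4 u₀ u₁ 0 0 (by rw [EE_zero, zero_mul, add_zero, h0])
      exact hH1 ⟨z0, z1⟩
    · -- f equation
      have ef2 : EE P y₀ y₁ = EE P x₀ x₁ * EE P 0 Λ := by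
        rw [EE_mul P hPreA hσP]
        exact EE_congr P (by rw [hgy₀]; ring) (by rw [hgy₁]; ring)
      have hE0 : EE P 0 Λ = (Λ : Quaternion A) * P := by simp [EE]
      calc f = EE P x₀ x₁ + EE P y₀ y₁ * Q := hdecf
        _ = EE P x₀ x₁ * (1 + (Λ : Quaternion A) * (P * Q)) := by
            rw [ef2, mul_add, mul_one, hE0, mul_assoc, ← mul_assoc (Λ : Quaternion A)]
        _ = EE P x₀ x₁ * (1 + ((a + ε)/b) • qmap K₀) := by rw [hsm]
    · -- h equation
      have eh2 : EE P v₀ v₁ = -(EE P 0 Λ * EE P u₀ (-u₁)) := by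
        rw [EE_mul P hPreA hσP, EE_neg]
        exact EE_congr P (by rw [hgv₀]; ring) (by rw [hgv₁]; ring)
      have hE0 : EE P 0 Λ = (Λ : Quaternion A) * P := by simp [EE]
      calc h = EE P u₀ u₁ + EE P v₀ v₁ * Q := hdech
        _ = EE P u₀ u₁ - EE P 0 Λ * (EE P u₀ (-u₁) * Q) := by
            rw [eh2, neg_mul, ← sub_eq_add_neg, mul_assoc]
        _ = EE P u₀ u₁ - EE P 0 Λ * (Q * EE P u₀ u₁) := by
            rw [EE_swap P Q hPreA hQreA hdotA]
        _ = (1 - (Λ : Quaternion A) * (P * Q)) * EE P u₀ u₁ := by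
            rw [sub_mul, one_mul, hE0]
            noncomm_ring
        _ = (1 - ((a + ε)/b) • qmap K₀) * EE P u₀ u₁ := by rw [hsm]
  rcases hη with hη | hη
  · refine ⟨-1, Or.inr rfl, ?_⟩
    apply main
    rw [hη, map_add, map_neg, map_one]
    ring
  · refine ⟨1, Or.inl rfl, ?_⟩
    apply main
    rw [hη, map_add, map_one]
    ring
end

section
/- Let A be a commutative ring and let f ∈ Quaternion A have scalar part s ∈ A and vector part v = v₁i + v₂j + v₃k; set N := v₁² + v₂² + v₃² ∈ A. Then for every d ∈ ℕ, f^d = Σ_{n=0}^{⌊d/2⌋} (−1)^n·(d choose 2n)·s^{d−2n}·N^n + (Σ_{n=0}^{⌊(d−1)/2⌋} (−1)^n·(d choose 2n+1)·s^{d−(2n+1)}·N^n)·v, where elements of A are identified with scalar quaternions. (Lemma 7.1.) -/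
open Quaternion

private lemma sum_even_odd_split {M : Type*} [AddCommMonoid M] (g : ℕ → M) (K : ℕ) :
    ∑ m ∈ Finset.range (2 * K), g m =
      ∑ n ∈ Finset.range K, g (2 * n) + ∑ n ∈ Finset.range K, g (2 * n + 1) := by
  induction K with
  | zero => simp
  | succ k ih =>
      rw [show 2 * (k + 1) = (2 * k + 1) + 1 by ring, Finset.sum_range_succ,
        Finset.sum_range_succ, Finset.sum_range_succ (fun n => g (2 * n)) k,
        Finset.sum_range_succ (fun n => g (2 * n + 1)) k, ih]
      abel

private lemma quat_coe_sum {A : Type*} [CommRing A] {ι : Type*} (t : Finset ι) (h : ι → A) :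
    ((∑ i ∈ t, h i : A) : Quaternion A) = ∑ i ∈ t, ((h i : A) : Quaternion A) := by
  induction t using Finset.cons_induction with
  | empty => simp
  | cons a t ha ih => rw [Finset.sum_cons, Finset.sum_cons, Quaternion.coe_add, ih]

theorem pow_eq_sum_formula {A : Type*} [CommRing A] (f : Quaternion A)
    (s N : A) (hs : s = f.re)
    (hN : N = f.imI ^ 2 + f.imJ ^ 2 + f.imK ^ 2) (d : ℕ) :
    f ^ d =
      ((∑ n ∈ Finset.range (d / 2 + 1),
          (-1 : A) ^ n * (d.choose (2 * n) : A) * s ^ (d - 2 * n) * N ^ n : A) : Quaternion A)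
      + ((∑ n ∈ Finset.range ((d - 1) / 2 + 1),
          (-1 : A) ^ n * (d.choose (2 * n + 1) : A) * s ^ (d - (2 * n + 1)) * N ^ n : A) :
            Quaternion A) * f.im := by
  have hsq : f.im * f.im = ((-N : A) : Quaternion A) := by
    ext <;>
      simp only [Quaternion.re_mul, Quaternion.imI_mul, Quaternion.imJ_mul, Quaternion.imK_mul,
        Quaternion.re_im, Quaternion.imI_im, Quaternion.imJ_im, Quaternion.imK_im,
        Quaternion.re_coe, Quaternion.imI_coe, Quaternion.imJ_coe, Quaternion.imK_coe, hN] <;>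
      ring
  have himpow : ∀ n : ℕ, f.im ^ (2 * n) = (((-1 : A) ^ n * N ^ n : A) : Quaternion A) := by
    intro n
    rw [pow_mul, show f.im ^ 2 = f.im * f.im from sq f.im, hsq, ← Quaternion.coe_pow]
    congr 1
    rw [neg_pow]
  have hcomm : Commute f.im ((s : A) : Quaternion A) := (Quaternion.coe_commutes s f.im).symm
  have key : f = f.im + ((s : A) : Quaternion A) := by
    rw [hs, add_comm, Quaternion.re_add_im]
  have h1 : f ^ d = ∑ m ∈ Finset.range (2 * (d + 1)),
      f.im ^ m * ((s : A) : Quaternion A) ^ (d - m) * (d.choose m : Quaternion A) := by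
    conv_lhs => rw [key, hcomm.add_pow]
    refine Finset.sum_subset
      (f := fun m => f.im ^ m * ((s : A) : Quaternion A) ^ (d - m) * (d.choose m : Quaternion A))
      (Finset.range_subset_range.mpr (by omega : d + 1 ≤ 2 * (d + 1))) ?_
    intro m _ hm
    simp only [Finset.mem_range, not_lt] at hm
    simp [Nat.choose_eq_zero_of_lt (by omega : d < m)]
  rw [h1, sum_even_odd_split
    (fun m => f.im ^ m * ((s : A) : Quaternion A) ^ (d - m) * (d.choose m : Quaternion A))
    (d + 1)]
  congr 1
  · -- even part
    rw [quat_coe_sum]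
    rw [← Finset.sum_subset (Finset.range_subset_range.mpr (by omega : d / 2 + 1 ≤ d + 1))
      (fun m _ hm => by
        simp only [Finset.mem_range, not_lt] at hm
        simp [Nat.choose_eq_zero_of_lt (by omega : d < 2 * m)])]
    refine Finset.sum_congr rfl fun n _ => ?_
    rw [himpow n, ← Quaternion.coe_natCast, ← Quaternion.coe_pow, ← Quaternion.coe_mul,
      ← Quaternion.coe_mul]
    congr 1
    ring
  · -- odd part
    rw [quat_coe_sum, Finset.sum_mul]
    rw [← Finset.sum_subset (Finset.range_subset_range.mpr (by omega : (d - 1) / 2 + 1 ≤ d + 1))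
      (fun m _ hm => by
        simp only [Finset.mem_range, not_lt] at hm
        simp [Nat.choose_eq_zero_of_lt (by omega : d < 2 * m + 1)])]
    refine Finset.sum_congr rfl fun n _ => ?_
    rw [show f.im ^ (2 * n + 1) = (((-1 : A) ^ n * N ^ n : A) : Quaternion A) * f.im by
      rw [pow_succ, himpow n]]
    rw [← Quaternion.coe_natCast, ← Quaternion.coe_pow, mul_assoc, mul_assoc,
      ← Quaternion.coe_mul, ← Quaternion.coe_commutes, ← mul_assoc, ← Quaternion.coe_mul]
    congr 1
    ring
end

section
/- Let A be an integral domain which is an ℝ-algebra and let d > 2 be a natural number. Define Σ_d := {ξ ∈ ℝ : ξ ≠ 0 and Σ_{n=0}^{⌊(d−1)/2⌋} (−1)^n·(d choose 2n+1)·ξ^{d−(2n+1)} = 0}, the set of nonzero real roots of the dehomogenized binary form Q_d(x, 1). Let f ∈ Quaternion A have scalar part s ≠ 0 and vector part v = v₁i + v₂j + v₃k with v ≠ 0, and set N := v₁² + v₂² + v₃² ∈ A. Then f^d has zero vector part if and only if there exists ξ ∈ Σ_d with s² = algebraMap ℝ A (ξ²)·N. (Proposition 7.4: the *-power f^{*d}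 is slice preserving exactly when f₀² = ξ²·f_v^s for some ξ ∈ Σ_d.) -/
open Quaternion

/-- `Σ_d`: the nonzero real roots of the dehomogenized binary form `Q_d(x, 1)`. -/
def SigmaSet (d : ℕ) : Set ℝ :=
  {ξ : ℝ | ξ ≠ 0 ∧
    ∑ n ∈ Finset.range ((d - 1) / 2 + 1),
      (-1 : ℝ) ^ n * (d.choose (2 * n + 1) : ℝ) * ξ ^ (d - (2 * n + 1)) = 0}


/-- The pair `(a_m, b_m)` with `(s + v)^m = a_m + b_m v`, `v^2 = -n`. -/
def abSeq {R : Type*} [CommRing R] (s n : R) : ℕ → R × R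
  | 0 => (1, 0)
  | m + 1 =>
      ((abSeq s n m).1 * s - (abSeq s n m).2 * n, (abSeq s n m).1 + (abSeq s n m).2 * s)

lemma abSeq_map {R S : Type*} [CommRing R] [CommRing S] (φ : R →+* S) (s n : R) (m : ℕ) :
    abSeq (φ s) (φ n) m = (φ (abSeq s n m).1, φ (abSeq s n m).2) := by
  induction m with
  | zero => simp [abSeq]
  | succ m ih => simp [abSeq, ih]

lemma quat_pow_eq {A : Type*} [CommRing A] (f : Quaternion A) (N : A)
    (hN : N = f.imI ^ 2 + f.imJ ^ 2 + f.imK ^ 2) (m : ℕ) :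
    f ^ m = ⟨(abSeq f.re N m).1, (abSeq f.re N m).2 * f.imI,
      (abSeq f.re N m).2 * f.imJ, (abSeq f.re N m).2 * f.imK⟩ := by
  induction m with
  | zero => simp [abSeq]; rfl
  | succ m ih =>
      rw [pow_succ, ih]
      ext
      · refine (Quaternion.re_mul _ _).trans ?_
        simp only [abSeq, hN]; ring
      · refine (Quaternion.imI_mul _ _).trans ?_
        simp only [abSeq, hN]; ring
      · refine (Quaternion.imJ_mul _ _).trans ?_
        simp only [abSeq, hN]; ring
      · refine (Quaternion.imK_mul _ _).trans ?_
        simp only [abSeq, hN]; ring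

lemma abSeq_complex (x y : ℝ) (m : ℕ) :
    ((x : ℂ) + y * Complex.I) ^ m =
      ((abSeq x (y ^ 2) m).1 : ℝ) + ((abSeq x (y ^ 2) m).2 * y : ℝ) * Complex.I := by
  induction m with
  | zero => simp [abSeq]
  | succ m ih =>
      rw [pow_succ, ih]
      simp only [abSeq]
      push_cast
      ring_nf
      rw [Complex.I_sq]
      ring


lemma abSeq_scale {R : Type*} [CommRing R] (t x w : R) (m : ℕ) :
    (abSeq (t * x) (t ^ 2 * w) m).1 = t ^ m * (abSeq x w m).1 ∧
      t * (abSeq (t * x) (t ^ 2 * w) m).2 = t ^ m * (abSeq x w m).2 := by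
  induction m with
  | zero => simp [abSeq]
  | succ m ih =>
      obtain ⟨h1, h2⟩ := ih
      constructor
      · show (abSeq (t*x) (t^2*w) m).1 * (t*x) - (abSeq (t*x) (t^2*w) m).2 * (t^2*w) = _
        have h : (abSeq (t*x) (t^2*w) m).2 * (t ^ 2 * w) = (t * (abSeq (t*x) (t^2*w) m).2) * (t * w) := by ring
        rw [h, h1, h2]
        show _ = t ^ (m+1) * ((abSeq x w m).1 * x - (abSeq x w m).2 * w)
        ring
      · show t * ((abSeq (t*x) (t^2*w) m).1 + (abSeq (t*x) (t^2*w) m).2 * (t*x)) = _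
        have h : t * ((abSeq (t*x) (t^2*w) m).1 + (abSeq (t*x) (t^2*w) m).2 * (t*x))
            = t * (abSeq (t*x) (t^2*w) m).1 + (t * (abSeq (t*x) (t^2*w) m).2) * (t*x) := by ring
        rw [h, h1, h2]
        show _ = t ^ (m+1) * ((abSeq x w m).1 + (abSeq x w m).2 * x)
        ring

lemma sum_range_two_mul_add_two (g : ℕ → ℝ) (m : ℕ) :
    ∑ k ∈ Finset.range (2 * m + 2), g k = ∑ n ∈ Finset.range (m + 1), (g (2 * n) + g (2 * n + 1)) := by
  induction m with
  | zero => simp [Finset.sum_range_succ]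
  | succ m ih =>
      have h : 2 * (m + 1) + 2 = (2 * m + 2) + 1 + 1 := by ring
      rw [h, Finset.sum_range_succ, Finset.sum_range_succ, ih,
        Finset.sum_range_succ (fun n => g (2 * n) + g (2 * n + 1)) (m + 1)]
      have h1 : 2 * m + 2 = 2 * (m + 1) := by ring
      have h2 : 2 * m + 2 + 1 = 2 * (m + 1) + 1 := by ring
      rw [h1, h2, add_assoc]

lemma I_pow_two_mul_im (n : ℕ) : (Complex.I ^ (2 * n)).im = 0 := by
  rw [pow_mul, Complex.I_sq]
  have : (-1 : ℂ) ^ n = (((-1 : ℝ) ^ n : ℝ) : ℂ) := by push_cast; ring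
  rw [this, Complex.ofReal_im]

lemma I_pow_two_mul_add_one_im (n : ℕ) : (Complex.I ^ (2 * n + 1)).im = (-1 : ℝ) ^ n := by
  rw [pow_succ, pow_mul, Complex.I_sq]
  have : (-1 : ℂ) ^ n = (((-1 : ℝ) ^ n : ℝ) : ℂ) := by push_cast; ring
  rw [this, Complex.mul_im, Complex.ofReal_re, Complex.ofReal_im, Complex.I_im, Complex.I_re,
    mul_one, zero_mul, add_zero]

lemma im_pow_eq_sum (d : ℕ) (hd : 1 ≤ d) (x : ℝ) :
    (((x : ℂ) + Complex.I) ^ d).im =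
      ∑ n ∈ Finset.range ((d - 1) / 2 + 1),
        (-1 : ℝ) ^ n * (d.choose (2 * n + 1) : ℝ) * x ^ (d - (2 * n + 1)) := by
  have hb : ((x : ℂ) + Complex.I) ^ d
      = ∑ k ∈ Finset.range (d + 1), Complex.I ^ k * (x : ℂ) ^ (d - k) * (d.choose k : ℂ) := by
    rw [add_comm]; exact add_pow _ _ _
  rw [hb, Complex.im_sum]
  have him : ∀ k, (Complex.I ^ k * (x : ℂ) ^ (d - k) * (d.choose k : ℂ)).im
      = (Complex.I ^ k).im * (x ^ (d - k) * (d.choose k : ℝ)) := by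
    intro k
    have h : ((x : ℂ)) ^ (d - k) * (d.choose k : ℂ) = ((x ^ (d - k) * (d.choose k : ℝ) : ℝ) : ℂ) := by
      push_cast; ring
    rw [mul_assoc, h, Complex.mul_im, Complex.ofReal_re, Complex.ofReal_im, mul_zero, zero_add]
  simp only [him]
  have hkey : ∑ k ∈ Finset.range (2 * ((d - 1) / 2) + 2),
        (Complex.I ^ k).im * (x ^ (d - k) * (d.choose k : ℝ))
      = ∑ n ∈ Finset.range ((d - 1) / 2 + 1),
        (-1 : ℝ) ^ n * (d.choose (2 * n + 1) : ℝ) * x ^ (d - (2 * n + 1)) := by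
    rw [sum_range_two_mul_add_two]
    refine Finset.sum_congr rfl fun n _ => ?_
    rw [I_pow_two_mul_im, I_pow_two_mul_add_one_im, zero_mul, zero_add]
    ring
  rcases Nat.even_or_odd d with ⟨t, ht⟩ | ⟨t, ht⟩
  · have h2 : d + 1 = (2 * ((d - 1) / 2) + 2) + 1 := by omega
    have h3 : 2 * ((d - 1) / 2) + 2 = 2 * t := by omega
    rw [h2, Finset.sum_range_succ, hkey, h3, I_pow_two_mul_im, zero_mul, add_zero]
  · have h2 : d + 1 = 2 * ((d - 1) / 2) + 2 := by omega
    rw [h2, hkey]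

section TrigPart
open Real

noncomputable def rt (d k : ℕ) : ℝ := cos (k * π / d) / sin (k * π / d)

lemma theta_mem {d k : ℕ} (hd : 0 < d) (hk1 : 1 ≤ k) (hk2 : k ≤ d - 1) :
    0 < (k : ℝ) * π / d ∧ (k : ℝ) * π / d < π := by
  have hπ := Real.pi_pos
  have hd' : (0 : ℝ) < d := by exact_mod_cast hd
  have hk' : (1 : ℝ) ≤ k := by exact_mod_cast hk1
  have hkd : (k : ℝ) < d := by exact_mod_cast (by omega : k < d)
  constructor
  · positivity
  · rw [div_lt_iff₀ hd']
    nlinarith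

lemma sin_theta_pos {d k : ℕ} (hd : 0 < d) (hk1 : 1 ≤ k) (hk2 : k ≤ d - 1) :
    0 < sin ((k : ℝ) * π / d) :=
  Real.sin_pos_of_pos_of_lt_pi (theta_mem hd hk1 hk2).1 (theta_mem hd hk1 hk2).2

lemma abSeq_rt_eq_zero {d k : ℕ} (hd : 0 < d) (hk1 : 1 ≤ k) (hk2 : k ≤ d - 1) :
    (abSeq (rt d k) (1 : ℝ) d).2 = 0 := by
  set θ : ℝ := (k : ℝ) * π / d with hθ
  have hs : 0 < sin θ := sin_theta_pos hd hk1 hk2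
  have hc : ((rt d k : ℝ) : ℂ) + Complex.I
      = ((sin θ : ℝ) : ℂ)⁻¹ * (Complex.cos (θ : ℂ) + Complex.sin (θ : ℂ) * Complex.I) := by
    rw [← Complex.ofReal_cos, ← Complex.ofReal_sin, rt, ← hθ]
    have hs' : ((sin θ : ℝ) : ℂ) ≠ 0 := by
      exact_mod_cast hs.ne'
    rw [mul_add, ← mul_assoc, inv_mul_cancel₀ hs', one_mul, Complex.ofReal_div,
      div_eq_inv_mul]
  have hdθ : (d : ℂ) * (θ : ℂ) = ((k : ℕ) * π : ℝ) := by
    rw [hθ]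
    push_cast
    have : (d : ℂ) ≠ 0 := by exact_mod_cast Nat.cast_ne_zero.mpr hd.ne'
    field_simp
  have hpow : (((rt d k : ℝ) : ℂ) + Complex.I) ^ d
      = (((sin θ)⁻¹ ^ d * cos ((k : ℕ) * π) : ℝ) : ℂ) := by
    rw [hc, mul_pow, Complex.cos_add_sin_mul_I_pow, hdθ, ← Complex.ofReal_cos,
      ← Complex.ofReal_sin, Real.sin_nat_mul_pi]
    push_cast
    ring
  have h2 := abSeq_complex (rt d k) 1 d
  rw [one_pow] at h2
  have him : ((((rt d k : ℝ) : ℂ) + Complex.I) ^ d).im = (abSeq (rt d k) (1 : ℝ) d).2 := by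
    rw [show ((rt d k : ℝ) : ℂ) + Complex.I = ((rt d k : ℝ) : ℂ) + (1 : ℝ) * Complex.I by simp,
      h2]
    simp
  rw [← him, hpow, Complex.ofReal_im]

lemma rt_injOn {d : ℕ} (hd : 0 < d) :
    Set.InjOn (rt d) (Finset.Icc 1 (d - 1)) := by
  intro k hk k' hk' h
  simp only [Finset.coe_Icc, Set.mem_Icc] at hk hk'
  have hπ := Real.pi_pos
  have hs : 0 < sin ((k : ℝ) * π / d) := sin_theta_pos hd hk.1 hk.2
  have hs' : 0 < sin ((k' : ℝ) * π / d) := sin_theta_pos hd hk'.1 hk'.2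
  have hcross : cos ((k : ℝ) * π / d) * sin ((k' : ℝ) * π / d)
      = cos ((k' : ℝ) * π / d) * sin ((k : ℝ) * π / d) := by
    rw [rt, rt, div_eq_div_iff hs.ne' hs'.ne'] at h
    linarith [h]
  have hsin0 : sin ((k : ℝ) * π / d - (k' : ℝ) * π / d) = 0 := by
    rw [Real.sin_sub]
    nlinarith [hcross]
  have hb1 := (theta_mem hd hk.1 hk.2).1
  have hb2 := (theta_mem hd hk.1 hk.2).2
  have hb3 := (theta_mem hd hk'.1 hk'.2).1
  have hb4 := (theta_mem hd hk'.1 hk'.2).2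
  have := (Real.sin_eq_zero_iff_of_lt_of_lt (by linarith) (by linarith)).mp hsin0
  have hkk : (k : ℝ) = k' := by
    have hd' : (0 : ℝ) < d := by exact_mod_cast hd
    have : (k : ℝ) * π / d = (k' : ℝ) * π / d := by linarith
    field_simp at this
    linarith
  exact_mod_cast hkk

lemma rt_pair {d k : ℕ} (hd : 0 < d) (hk1 : 1 ≤ k) (hk2 : k ≤ d - 1) :
    rt d (d - k) = - rt d k := by
  have h : ((d - k : ℕ) : ℝ) * π / d = π - (k : ℝ) * π / d := by
    have hc : ((d - k : ℕ) : ℝ) = (d : ℝ) - k := by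
      push_cast [Nat.cast_sub (by omega : k ≤ d)]; ring
    have hd' : (d : ℝ) ≠ 0 := by exact_mod_cast hd.ne'
    rw [hc]
    field_simp
  rw [rt, rt, h, Real.cos_pi_sub, Real.sin_pi_sub, neg_div]

lemma rt_eq_zero {d k : ℕ} (hd : 0 < d) (h2k : 2 * k = d) : rt d k = 0 := by
  have hk : k ≠ 0 := by omega
  have h : (k : ℝ) * π / d = π / 2 := by
    have : (d : ℝ) = 2 * k := by exact_mod_cast h2k.symm
    rw [this]
    have hk' : (k : ℝ) ≠ 0 := Nat.cast_ne_zero.mpr hk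
    field_simp
  rw [rt, h, Real.cos_pi_div_two, zero_div]

lemma rt_ne_zero {d k : ℕ} (hk1 : 1 ≤ k) (h2k : 2 * k < d) : rt d k ≠ 0 := by
  have hd : 0 < d := by omega
  have hπ := Real.pi_pos
  have hd' : (0 : ℝ) < d := by exact_mod_cast hd
  have hcos : 0 < cos ((k : ℝ) * π / d) := by
    apply Real.cos_pos_of_mem_Ioo
    constructor
    · have := (theta_mem hd hk1 (by omega)).1
      linarith
    · rw [div_lt_iff₀ hd']
      have : (2 * k : ℝ) < d := by exact_mod_cast h2k
      nlinarith
  have hs : 0 < sin ((k : ℝ) * π / d) := sin_theta_pos hd hk1 (by omega)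
  exact ne_of_gt (div_pos hcos hs)

end TrigPart

section PolyPart
open Polynomial

/-- Degree/coefficient data for the polynomial sequence. -/
lemma abSeq_poly_deg (m : ℕ) (hm : 1 ≤ m) :
    ((abSeq (X : ℝ[X]) 1 m).1.natDegree ≤ m ∧ (abSeq (X : ℝ[X]) 1 m).1.coeff m = 1) ∧
      ((abSeq (X : ℝ[X]) 1 m).2.natDegree ≤ m - 1 ∧
        (abSeq (X : ℝ[X]) 1 m).2.coeff (m - 1) = (m : ℝ)) := by
  induction m with
  | zero => omega
  | succ m ih =>
      rcases Nat.eq_or_lt_of_le hm with h1 | h1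
      · -- m + 1 = 1, i.e. m = 0
        have hm0 : m = 0 := by omega
        subst hm0
        show ((((1:ℝ[X]) * X - 0 * 1).natDegree ≤ 1 ∧ _) ∧ _)
        norm_num [abSeq]
      · have hm1 : 1 ≤ m := by omega
        obtain ⟨⟨ha1, ha2⟩, hb1, hb2⟩ := ih hm1
        set a := (abSeq (X : ℝ[X]) 1 m).1
        set b := (abSeq (X : ℝ[X]) 1 m).2
        have hstep : abSeq (X : ℝ[X]) 1 (m + 1) = (a * X - b * 1, a + b * X) := rfl
        rw [hstep]
        have hbm : b.natDegree < m := by omega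
        constructor
        · constructor
          · refine le_trans (natDegree_sub_le _ _) ?_
            simp only [mul_one]
            refine max_le (le_trans (natDegree_mul_le) ?_) (by omega)
            simp [natDegree_X]; omega
          · rw [mul_one, coeff_sub, coeff_mul_X, ha2,
              coeff_eq_zero_of_natDegree_lt (by omega), sub_zero]
        · constructor
          · refine le_trans (natDegree_add_le _ _) ?_
            simp only [Nat.add_sub_cancel]
            refine max_le ha1 (le_trans (natDegree_mul_le) ?_)
            simp [natDegree_X]; omega
          · have hmm : m + 1 - 1 = (m - 1) + 1 := by omega
            rw [Nat.add_sub_cancel, coeff_add, show m = (m-1)+1 by omega, coeff_mul_X, hb2]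
            rw [show (m-1)+1 = m by omega, ha2]
            push_cast [show (m-1)+1 = m by omega]
            ring

noncomputable def qpoly (d : ℕ) : ℝ[X] :=
  C (d : ℝ) * (X ^ ((d - 1) % 2) *
    ∏ k ∈ Finset.Icc 1 ((d - 1) / 2), (X ^ 2 - C (rt d k ^ 2)))

lemma qpoly_eval (d : ℕ) (x : ℝ) :
    (qpoly d).eval x = (d : ℝ) * x ^ ((d - 1) % 2) *
      ∏ k ∈ Finset.Icc 1 ((d - 1) / 2), (x ^ 2 - rt d k ^ 2) := by
  simp [qpoly, eval_prod, mul_assoc]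

lemma abSeq_poly_eval (d : ℕ) (x : ℝ) :
    (abSeq (X : ℝ[X]) (1 : ℝ[X]) d).2.eval x = (abSeq x 1 d).2 := by
  have h := abSeq_map (evalRingHom x) (X : ℝ[X]) 1 d
  simp only [coe_evalRingHom, eval_X, map_one] at h
  rw [h]

lemma abSeq_poly_factor {d : ℕ} (hd : 2 < d) :
    (abSeq (X : ℝ[X]) (1 : ℝ[X]) d).2 = qpoly d := by
  set m' := (d - 1) / 2 with hm'
  set ε := (d - 1) % 2 with hε
  have hde : 2 * m' + ε = d - 1 := by rw [hm', hε]; omega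
  have hεle : ε ≤ 1 := by omega
  set p := (abSeq (X : ℝ[X]) (1 : ℝ[X]) d).2 with hp
  obtain ⟨-, hpdeg, hpcoeff⟩ := abSeq_poly_deg d (by omega)
  set P0 : ℝ[X] := X ^ ε * ∏ k ∈ Finset.Icc 1 m', (X ^ 2 - C (rt d k ^ 2)) with hP0
  have hP0monic : P0.Monic := by
    refine (monic_X_pow ε).mul (monic_prod_of_monic _ _ fun k _ => ?_)
    exact monic_X_pow_sub_C _ two_ne_zero
  have hP0deg : P0.natDegree = d - 1 := by
    rw [hP0, natDegree_mul (pow_ne_zero ε X_ne_zero)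
      (monic_prod_of_monic _ _ fun k _ => monic_X_pow_sub_C _ two_ne_zero).ne_zero,
      natDegree_X_pow, natDegree_prod_of_monic _ _ fun k _ => monic_X_pow_sub_C _ two_ne_zero]
    have : ∀ k ∈ Finset.Icc 1 m', (X ^ 2 - C (rt d k ^ 2) : ℝ[X]).natDegree = 2 :=
      fun k _ => natDegree_X_pow_sub_C
    rw [Finset.sum_congr rfl this, Finset.sum_const, Nat.card_Icc, smul_eq_mul]
    omega
  have hq : qpoly d = C (d : ℝ) * P0 := rfl
  have hqdeg : (qpoly d).natDegree ≤ d - 1 := by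
    rw [hq]
    exact le_trans (natDegree_C_mul_le _ _) (le_of_eq hP0deg)
  have hqcoeff : (qpoly d).coeff (d - 1) = (d : ℝ) := by
    rw [hq, coeff_C_mul, ← hP0deg, hP0monic.coeff_natDegree, mul_one]
  -- roots of qpoly
  have hqroot : ∀ k ∈ Finset.Icc 1 (d - 1), (qpoly d).eval (rt d k) = 0 := by
    intro k hk
    rw [Finset.mem_Icc] at hk
    rw [qpoly_eval]
    by_cases hkm : k ≤ m'
    · have : (∏ j ∈ Finset.Icc 1 m', (rt d k ^ 2 - rt d j ^ 2)) = 0 :=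
        Finset.prod_eq_zero (Finset.mem_Icc.mpr ⟨hk.1, hkm⟩) (by ring)
      rw [this, mul_zero]
    · by_cases h2k : 2 * k = d
      · have hε1 : ε = 1 := by omega
        rw [rt_eq_zero (by omega) h2k, show (d - 1) % 2 = 1 by omega]
        norm_num
      · have hj : 1 ≤ d - k ∧ d - k ≤ m' := by omega
        have : (∏ j ∈ Finset.Icc 1 m', (rt d k ^ 2 - rt d j ^ 2)) = 0 := by
          refine Finset.prod_eq_zero (Finset.mem_Icc.mpr hj) ?_
          rw [rt_pair (by omega) hk.1 hk.2]
          ring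
        rw [this, mul_zero]
  -- the difference vanishes
  have hsub : p - qpoly d = 0 := by
    by_contra hne
    have hcoeff : (p - qpoly d).coeff (d - 1) = 0 := by
      rw [coeff_sub, hpcoeff, hqcoeff, sub_self]
    have hDdeg : (p - qpoly d).natDegree ≤ d - 1 :=
      le_trans (natDegree_sub_le _ _) (max_le hpdeg hqdeg)
    have hDlt : (p - qpoly d).natDegree < d - 1 := by
      rcases Nat.lt_or_ge (p - qpoly d).natDegree (d - 1) with h | h
      · exact h
      · exfalso
        have hdeq : (p - qpoly d).natDegree = d - 1 := le_antisymm hDdeg h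
        have := leadingCoeff_ne_zero.mpr hne
        rw [leadingCoeff, hdeq, hcoeff] at this
        exact this rfl
    apply hne
    refine eq_zero_of_natDegree_lt_card_of_eval_eq_zero' _
      ((Finset.Icc 1 (d - 1)).image (rt d)) ?_ ?_
    · intro x hx
      obtain ⟨k, hk, rfl⟩ := Finset.mem_image.mp hx
      rw [eval_sub, abSeq_poly_eval, hqroot k hk,
        abSeq_rt_eq_zero (by omega) (Finset.mem_Icc.mp hk).1 (Finset.mem_Icc.mp hk).2, sub_self]
    · rw [Finset.card_image_of_injOn (rt_injOn (by omega)), Nat.card_Icc]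
      omega
  have := sub_eq_zero.mp hsub
  exact this

lemma abSeq_one_factor {d : ℕ} (hd : 2 < d) (x : ℝ) :
    (abSeq x (1 : ℝ) d).2 = (d : ℝ) * x ^ ((d - 1) % 2) *
      ∏ k ∈ Finset.Icc 1 ((d - 1) / 2), (x ^ 2 - rt d k ^ 2) := by
  rw [← abSeq_poly_eval, abSeq_poly_factor hd, qpoly_eval]

end PolyPart

lemma abSeq_two_var_pos {d : ℕ} (hd : 2 < d) (x w : ℝ) (hw : 0 < w) :
    (abSeq x w d).2 = (d : ℝ) * x ^ ((d - 1) % 2) *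
      ∏ k ∈ Finset.Icc 1 ((d - 1) / 2), (x ^ 2 - rt d k ^ 2 * w) := by
  set t := Real.sqrt w with htdef
  have ht : 0 < t := Real.sqrt_pos.mpr hw
  have ht2 : t ^ 2 = w := Real.sq_sqrt hw.le
  have hscale := (abSeq_scale t (x / t) 1 d).2
  rw [mul_comm t (x / t), div_mul_cancel₀ x ht.ne', mul_one, ht2] at hscale
  -- hscale : t * (abSeq x w d).2 = t ^ d * (abSeq (x/t) 1 d).2
  have hb := abSeq_one_factor hd (x / t)
  set m' := (d - 1) / 2 with hm'
  set ε := (d - 1) % 2 with hε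
  have hde : 2 * m' + ε = d - 1 := by omega
  have hcard : (Finset.Icc 1 m').card = m' := by rw [Nat.card_Icc]; omega
  apply mul_left_cancel₀ ht.ne'
  rw [hscale, hb]
  have hprodw : ∏ k ∈ Finset.Icc 1 m', (x ^ 2 - rt d k ^ 2 * w)
      = (t ^ 2) ^ m' * ∏ k ∈ Finset.Icc 1 m', ((x / t) ^ 2 - rt d k ^ 2) := by
    have hconst : (t ^ 2) ^ m' = ∏ _k ∈ Finset.Icc 1 m', t ^ 2 := by
      rw [Finset.prod_const, hcard]
    rw [hconst, ← Finset.prod_mul_distrib]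
    refine Finset.prod_congr rfl fun k _ => ?_
    have hx : t ^ 2 * (x / t) ^ 2 = x ^ 2 := by
      rw [div_pow]
      field_simp
    rw [mul_sub, hx, ht2]
    ring
  rw [hprodw]
  have hxε : t ^ ε * (x / t) ^ ε = x ^ ε := by
    rw [← mul_pow, mul_comm, div_mul_cancel₀ x ht.ne']
  rw [← hxε, show d = 2 * m' + ε + 1 from by omega, pow_add, pow_add, pow_mul]
  ring


open Polynomial in
lemma abSeq_two_var {d : ℕ} (hd : 2 < d) (x w : ℝ) :
    (abSeq x w d).2 = (d : ℝ) * x ^ ((d - 1) % 2) *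
      ∏ k ∈ Finset.Icc 1 ((d - 1) / 2), (x ^ 2 - rt d k ^ 2 * w) := by
  set F : ℝ[X] := (abSeq (C x) (X : ℝ[X]) d).2 with hF
  set G : ℝ[X] := C ((d : ℝ) * x ^ ((d - 1) % 2)) *
      ∏ k ∈ Finset.Icc 1 ((d - 1) / 2), (C (x ^ 2) - C (rt d k ^ 2) * X) with hG
  have hevalF : ∀ u : ℝ, F.eval u = (abSeq x u d).2 := by
    intro u
    have h := abSeq_map (evalRingHom u) (C x) (X : ℝ[X]) d
    simp only [coe_evalRingHom, eval_C, eval_X] at h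
    rw [hF, h]
  have hevalG : ∀ u : ℝ, G.eval u = (d : ℝ) * x ^ ((d - 1) % 2) *
      ∏ k ∈ Finset.Icc 1 ((d - 1) / 2), (x ^ 2 - rt d k ^ 2 * u) := by
    intro u
    simp [hG, eval_prod]
  have hFG : F = G := by
    apply Polynomial.eq_of_infinite_eval_eq
    apply Set.Infinite.mono (s := Set.Ioi (0 : ℝ))
    · intro u hu
      simp only [Set.mem_setOf_eq]
      rw [hevalF, hevalG, abSeq_two_var_pos hd x u hu]
    · exact Set.Ioi_infinite 0
  rw [← hevalF w, hFG, hevalG]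

open MvPolynomial in
lemma abSeq_factor_general {A : Type*} [CommRing A] [Algebra ℝ A] {d : ℕ} (hd : 2 < d)
    (s N : A) :
    (abSeq s N d).2 = algebraMap ℝ A d * s ^ ((d - 1) % 2) *
      ∏ k ∈ Finset.Icc 1 ((d - 1) / 2), (s ^ 2 - algebraMap ℝ A (rt d k ^ 2) * N) := by
  set Bmv : MvPolynomial (Fin 2) ℝ := (abSeq (X 0) (X 1) d).2 with hB
  set Qmv : MvPolynomial (Fin 2) ℝ := C (d : ℝ) * (X 0) ^ ((d - 1) % 2) *
      ∏ k ∈ Finset.Icc 1 ((d - 1) / 2), ((X 0) ^ 2 - C (rt d k ^ 2) * X 1) with hQ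
  have hBQ : Bmv = Qmv := by
    apply MvPolynomial.funext
    intro v
    have h := abSeq_map (MvPolynomial.eval v) (X 0 : MvPolynomial (Fin 2) ℝ) (X 1) d
    simp only [eval_X] at h
    have hBv : eval v Bmv = (abSeq (v 0) (v 1) d).2 := by rw [hB, h]
    rw [hBv, hQ]
    simp only [map_mul, map_prod, map_pow, map_sub, eval_C, eval_X]
    rw [abSeq_two_var hd (v 0) (v 1)]
  set g : Fin 2 → A := fun i => if i = 0 then s else N with hgdef
  letI : Algebra ℝ A := inferInstance
  have h := abSeq_map ((MvPolynomial.aeval g : MvPolynomial (Fin 2) ℝ →ₐ[ℝ] A) :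
      MvPolynomial (Fin 2) ℝ →+* A) (X 0 : MvPolynomial (Fin 2) ℝ) (X 1) d
  simp only [AlgHom.toRingHom_eq_coe, RingHom.coe_coe] at h
  have hg0 : (MvPolynomial.aeval g) (X 0 : MvPolynomial (Fin 2) ℝ) = s := by simp [hgdef]
  have hg1 : (MvPolynomial.aeval g) (X 1 : MvPolynomial (Fin 2) ℝ) = N := by simp [hgdef]
  rw [hg0, hg1] at h
  have h2 : (abSeq s N d).2 = MvPolynomial.aeval g Bmv := by rw [h]
  rw [h2, hBQ, hQ]
  simp only [map_mul, map_prod, map_pow, map_sub, MvPolynomial.aeval_C, hg0, hg1,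
    MvPolynomial.aeval_X]


lemma abSeq_one_eq_sum {d : ℕ} (hd : 1 ≤ d) (x : ℝ) :
    (abSeq x (1 : ℝ) d).2 =
      ∑ n ∈ Finset.range ((d - 1) / 2 + 1),
        (-1 : ℝ) ^ n * (d.choose (2 * n + 1) : ℝ) * x ^ (d - (2 * n + 1)) := by
  have h := abSeq_complex x 1 d
  rw [one_pow] at h
  have h2 : (abSeq x (1 : ℝ) d).2 = (((x : ℂ) + Complex.I) ^ d).im := by
    rw [show (x : ℂ) + Complex.I = (x : ℂ) + ((1 : ℝ) : ℂ) * Complex.I by simp, h]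
    simp
  rw [h2, im_pow_eq_sum d hd]

lemma rt_mem_SigmaSet {d k : ℕ} (hd : 2 < d) (hk1 : 1 ≤ k) (hk2 : k ≤ (d - 1) / 2) :
    rt d k ∈ SigmaSet d := by
  refine ⟨rt_ne_zero hk1 (by omega), ?_⟩
  rw [← abSeq_one_eq_sum (by omega)]
  exact abSeq_rt_eq_zero (by omega) hk1 (by omega)

lemma SigmaSet_exists_rt {d : ℕ} (hd : 2 < d) {ξ : ℝ} (hξ : ξ ∈ SigmaSet d) :
    ∃ k ∈ Finset.Icc 1 ((d - 1) / 2), ξ ^ 2 = rt d k ^ 2 := by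
  obtain ⟨hξ0, hsum⟩ := hξ
  rw [← abSeq_one_eq_sum (by omega), abSeq_one_factor hd] at hsum
  have hd0 : (d : ℝ) ≠ 0 := Nat.cast_ne_zero.mpr (by omega)
  have hξε : ξ ^ ((d - 1) % 2) ≠ 0 := pow_ne_zero _ hξ0
  have hprod : ∏ k ∈ Finset.Icc 1 ((d - 1) / 2), (ξ ^ 2 - rt d k ^ 2) = 0 := by
    rcases mul_eq_zero.mp hsum with h | h
    · exact absurd h (mul_ne_zero hd0 hξε)
    · exact h
  obtain ⟨k, hk, hk0⟩ := Finset.prod_eq_zero_iff.mp hprod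
  exact ⟨k, hk, sub_eq_zero.mp hk0⟩

theorem pow_scalar_iff_root_relation {A : Type*} [CommRing A] [IsDomain A] [Algebra ℝ A]
    (d : ℕ) (hd : 2 < d) (f : Quaternion A)
    (hre : f.re ≠ 0) (him : f.im ≠ 0) (N : A)
    (hN : N = f.imI ^ 2 + f.imJ ^ 2 + f.imK ^ 2) :
    (f ^ d).im = 0 ↔ ∃ ξ ∈ SigmaSet d, f.re ^ 2 = algebraMap ℝ A (ξ ^ 2) * N := by
  have hinj : Function.Injective (algebraMap ℝ A) := (algebraMap ℝ A).injective
  have hpow := quat_pow_eq f N hN d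
  set b := (abSeq f.re N d).2 with hbdef
  -- step 1 : (f ^ d).im = 0 ↔ b = 0
  have him' : ¬(f.imI = 0 ∧ f.imJ = 0 ∧ f.imK = 0) := by
    rintro ⟨h1, h2, h3⟩
    apply him
    ext <;> simp [h1, h2, h3]
  have step1 : (f ^ d).im = 0 ↔ b = 0 := by
    constructor
    · intro h
      have hI : (f ^ d).imI = 0 := by rw [← Quaternion.imI_im (f ^ d), h]; rfl
      have hJ : (f ^ d).imJ = 0 := by rw [← Quaternion.imJ_im (f ^ d), h]; rfl
      have hK : (f ^ d).imK = 0 := by rw [← Quaternion.imK_im (f ^ d), h]; rfl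
      rw [hpow] at hI hJ hK
      simp only at hI hJ hK
      by_contra hb
      exact him' ⟨(mul_eq_zero.mp hI).resolve_left hb,
        (mul_eq_zero.mp hJ).resolve_left hb, (mul_eq_zero.mp hK).resolve_left hb⟩
    · intro h
      rw [hpow]
      ext <;> simp [← hbdef, h] <;> rfl
  rw [step1]
  -- step 2 : factorization
  have hfac := abSeq_factor_general (A := A) hd f.re N
  rw [← hbdef] at hfac
  have hd0 : algebraMap ℝ A d ≠ 0 := fun h => by
    exact absurd (hinj (h.trans (map_zero _).symm)) (Nat.cast_ne_zero.mpr (by omega))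
  have hε : f.re ^ ((d - 1) % 2) ≠ 0 := pow_ne_zero _ hre
  constructor
  · intro hb0
    rw [hfac] at hb0
    have hprod : ∏ k ∈ Finset.Icc 1 ((d - 1) / 2),
        (f.re ^ 2 - algebraMap ℝ A (rt d k ^ 2) * N) = 0 := by
      rcases mul_eq_zero.mp hb0 with h | h
      · exact absurd h (mul_ne_zero hd0 hε)
      · exact h
    obtain ⟨k, hk, hk0⟩ := Finset.prod_eq_zero_iff.mp hprod
    rw [Finset.mem_Icc] at hk
    exact ⟨rt d k, rt_mem_SigmaSet hd hk.1 hk.2, sub_eq_zero.mp hk0⟩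
  · rintro ⟨ξ, hξ, hrel⟩
    obtain ⟨k, hk, hk2⟩ := SigmaSet_exists_rt hd hξ
    rw [hfac]
    apply mul_eq_zero_of_right
    apply Finset.prod_eq_zero hk
    rw [← hk2, ← hrel, sub_self]
end
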